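/- Let R be a subdirect product of finite algebras A and B, with prime intervals α ≺ β in Con(A) and γ ≺ δ in Con(B) that cannot be separated in either direction. Then for any (α,β)-minimal set U there is an idempotent unary polynomial f of R such that f(A) = U and f(B) is a (γ,δ)-minimal set. -/
import Mathlib


namespace UAlg

structure Sig where
  ι : Type
  arity : ι → ℕ

inductive Term (σ : Sig) (n : ℕ) : Type where
  | var : Fin n → Term σ n
  | app : (i : σ.ι) → (Fin (σ.arity i) → Term σ n) → Term σ n

def Str (σ : Sig) (A : Type) : Type := ∀ i : σ.ι, (Fin (σ.arity i) → A) → A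

variable {σ : Sig} {A B : Type}

def Term.eval {n : ℕ} (S : Str σ A) : Term σ n → (Fin n → A) → A
  | .var j, x => x j
  | .app i ts, x => S i fun k => Term.eval S (ts k) x

/-- A subuniverse: a subset closed under all basic operations. -/
def Subuniv (S : Str σ A) (X : Set A) : Prop :=
  ∀ (i : σ.ι) (x : Fin (σ.arity i) → A), (∀ k, x k ∈ X) → S i x ∈ X

/-- Subalgebra generated by a set. -/
def Sg (S : Str σ A) (X : Set A) : Set A :=
  {a | ∀ Y : Set A, Subuniv S Y → X ⊆ Y → a ∈ Y}

def prodStr (S : Str σ A) (T : Str σ B) : Str σ (A × B) :=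
  fun i x => (S i (fun k => (x k).1), T i (fun k => (x k).2))

structure IsCongruence (S : Str σ A) (r : A → A → Prop) : Prop where
  refl : ∀ a, r a a
  symm : ∀ a b, r a b → r b a
  trans : ∀ a b c, r a b → r b c → r a c
  compat : ∀ (i : σ.ι) (x y : Fin (σ.arity i) → A),
    (∀ k, r (x k) (y k)) → r (S i x) (S i y)

/-- A tolerance: reflexive, symmetric, compatible binary relation. -/
def IsTolerance (S : Str σ A) (r : A → A → Prop) : Prop :=
  (∀ a, r a a) ∧ (∀ a b, r a b → r b a) ∧
    ∀ (i : σ.ι) (x y : Fin (σ.arity i) → A),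
      (∀ k, r (x k) (y k)) → r (S i x) (S i y)

/-- Unary polynomial: a term operation with parameters. -/
def IsUnaryPoly (S : Str σ A) (f : A → A) : Prop :=
  ∃ (n : ℕ) (t : Term σ (n + 1)) (c : Fin n → A),
    f = fun x => t.eval S (Fin.cons x c)

def IsBinPoly (S : Str σ A) (f : A → A → A) : Prop :=
  ∃ (n : ℕ) (t : Term σ (n + 2)) (c : Fin n → A),
    f = fun x y => t.eval S (Fin.cons x (Fin.cons y c))

def IsPolyOp (S : Str σ A) (n : ℕ) (f : (Fin n → A) → A) : Prop :=
  ∃ (m : ℕ) (t : Term σ (n + m)) (c : Fin m → A),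
    f = fun x => t.eval S (Fin.append x c)

def IsTermOp2 (S : Str σ A) (f : A → A → A) : Prop :=
  ∃ t : Term σ 2, f = fun x y => t.eval S (Fin.cons x (Fin.cons y (fun i => i.elim0)))

def IsTermOp3 (S : Str σ A) (f : A → A → A → A) : Prop :=
  ∃ t : Term σ 3,
    f = fun x y z => t.eval S (Fin.cons x (Fin.cons y (Fin.cons z (fun i => i.elim0))))

/-- `f` collapses `β` into `α`. -/
def Collapses (f : A → A) (β α : A → A → Prop) : Prop :=
  ∀ x y, β x y → α (f x) (f y)

def CongLE (r s : A → A → Prop) : Prop := ∀ x y, r x y → s x y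

/-- `β` covers `α` in the congruence lattice. -/
def Prec (S : Str σ A) (α β : A → A → Prop) : Prop :=
  CongLE α β ∧ α ≠ β ∧
    ∀ γ, IsCongruence S γ → CongLE α γ → CongLE γ β → γ = α ∨ γ = β

def MinSetWitness (S : Str σ A) (α β : A → A → Prop) (U : Set A) : Prop :=
  ∃ f, IsUnaryPoly S f ∧ ¬ Collapses f β α ∧ Set.range f = U

/-- An (α,β)-minimal set. -/
def MinSet (S : Str σ A) (α β : A → A → Prop) (U : Set A) : Prop :=
  MinSetWitness S α β U ∧ ∀ V, MinSetWitness S α β V → V ⊆ U → V = U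

/-- Term condition C(θ,β;α) (with polynomials). -/
def TC (S : Str σ A) (θ β α : A → A → Prop) : Prop :=
  ∀ (n : ℕ) (f : (Fin (n + 1) → A) → A), IsPolyOp S (n + 1) f →
    ∀ a b (u v : Fin n → A), θ a b → (∀ i, β (u i) (v i)) →
      (α (f (Fin.cons a u)) (f (Fin.cons a v)) ↔ α (f (Fin.cons b u)) (f (Fin.cons b v)))

/-- Strong term condition. -/
def STC (S : Str σ A) (θ β α : A → A → Prop) : Prop :=
  ∀ (n : ℕ) (f : (Fin (n + 1) → A) → A), IsPolyOp S (n + 1) f →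
    ∀ a b c (u v : Fin n → A), θ a b → θ a c → (∀ i, β (u i) (v i)) →
      α (f (Fin.cons a u)) (f (Fin.cons b v)) → α (f (Fin.cons c u)) (f (Fin.cons c v))

/-- An (α,β)-trace: intersection of a minimal set with a β-block on which β ≠ α. -/
def IsTrace (S : Str σ A) (α β : A → A → Prop) (N : Set A) : Prop :=
  ∃ U, MinSet S α β U ∧ ∃ a ∈ U, N = {x | x ∈ U ∧ β x a} ∧
    ∃ x ∈ N, ∃ y ∈ N, ¬ α x y

def TwoClasses (α : A → A → Prop) (N : Set A) (o e : A) : Prop :=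
  o ∈ N ∧ e ∈ N ∧ ¬ α o e ∧ ∀ x ∈ N, α x o ∨ α x e

def MeetOn (S : Str σ A) (α : A → A → Prop) (N : Set A) (o e : A) : Prop :=
  ∃ p, IsBinPoly S p ∧ (∀ x ∈ N, ∀ y ∈ N, p x y ∈ N) ∧
    ∀ x ∈ N, ∀ y ∈ N,
      (α x e → α y e → α (p x y) e) ∧ ((α x o ∨ α y o) → α (p x y) o)

def JoinOn (S : Str σ A) (α : A → A → Prop) (N : Set A) (o e : A) : Prop :=
  ∃ p, IsBinPoly S p ∧ (∀ x ∈ N, ∀ y ∈ N, p x y ∈ N) ∧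
    ∀ x ∈ N, ∀ y ∈ N,
      ((α x e ∨ α y e) → α (p x y) e) ∧ (α x o → α y o → α (p x y) o)

def NegOn (S : Str σ A) (α : A → A → Prop) (N : Set A) (o e : A) : Prop :=
  ∃ f, IsUnaryPoly S f ∧ (∀ x ∈ N, f x ∈ N) ∧
    ∀ x ∈ N, (α x e → α (f x) o) ∧ (α x o → α (f x) e)

def Typ3 (S : Str σ A) (α β : A → A → Prop) : Prop :=
  ¬ TC S β β α ∧ ∀ N, IsTrace S α β N →
    ∃ o e, TwoClasses α N o e ∧ MeetOn S α N o e ∧ JoinOn S α N o e ∧ NegOn S α N o e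

def Typ4 (S : Str σ A) (α β : A → A → Prop) : Prop :=
  ¬ TC S β β α ∧ (∀ N, IsTrace S α β N →
    ∃ o e, TwoClasses α N o e ∧ MeetOn S α N o e ∧ JoinOn S α N o e) ∧ ¬ Typ3 S α β

def Typ5 (S : Str σ A) (α β : A → A → Prop) : Prop :=
  ¬ TC S β β α ∧ (∀ N, IsTrace S α β N →
    ∃ o e, TwoClasses α N o e ∧ MeetOn S α N o e) ∧ ¬ Typ3 S α β ∧ ¬ Typ4 S α β

/-- Tame-congruence-theoretic type of the prime interval (α,β). -/
def TypIs (S : Str σ A) (α β : A → A → Prop) (k : ℕ) : Prop :=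
  match k with
  | 1 => STC S β β α
  | 2 => TC S β β α ∧ ¬ STC S β β α
  | 3 => Typ3 S α β
  | 4 => Typ4 S α β
  | 5 => Typ5 S α β
  | _ => False

/-- θ centralizes β modulo α (via binary polynomials). -/
def Centralizes (S : Str σ A) (θ β α : A → A → Prop) : Prop :=
  ∀ f, IsBinPoly S f → ∀ a b c d, θ a b → β c d →
    (α (f a c) (f a d) ↔ α (f b c) (f b d))

/-- ζ is the centralizer (α:β): the largest congruence centralizing β modulo α. -/
def IsCentralizer (S : Str σ A) (α β ζ : A → A → Prop) : Prop :=
  IsCongruence S ζ ∧ Centralizes S ζ β α ∧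
    ∀ θ, IsCongruence S θ → Centralizes S θ β α → CongLE θ ζ

/-- The quasi-centralizer relation ζ(α,β). -/
def QuasiCent (S : Str σ A) (α β : A → A → Prop) (a b : A) : Prop :=
  ∀ g, IsBinPoly S g →
    (Collapses (fun y => g a y) β α ↔ Collapses (fun y => g b y) β α)

def SubdirectProd (S : Str σ A) (T : Str σ B) (R : Set (A × B)) : Prop :=
  Subuniv (prodStr S T) R ∧ (∀ a, ∃ b, (a, b) ∈ R) ∧ (∀ b, ∃ a, (a, b) ∈ R)

/-- (f,g) are the coordinate actions of a single unary polynomial of R. -/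
def IsPolyPair (S : Str σ A) (T : Str σ B) (R : Set (A × B)) (f : A → A) (g : B → B) : Prop :=
  ∃ (n : ℕ) (t : Term σ (n + 1)) (c : Fin n → A × B), (∀ k, c k ∈ R) ∧
    (f = fun x => t.eval S (Fin.cons x (fun k => (c k).1))) ∧
    (g = fun y => t.eval T (Fin.cons y (fun k => (c k).2)))

def SeparatesPair (S : Str σ A) (T : Str σ B) (R : Set (A × B))
    (α β : A → A → Prop) (γ δ : B → B → Prop) : Prop :=
  ∃ f g, IsPolyPair S T R f g ∧ ¬ Collapses f β α ∧ Collapses g δ γ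

def SeparatesPairRev (S : Str σ A) (T : Str σ B) (R : Set (A × B))
    (γ δ : B → B → Prop) (α β : A → A → Prop) : Prop :=
  ∃ f g, IsPolyPair S T R f g ∧ ¬ Collapses g δ γ ∧ Collapses f β α

/-- Separation of prime intervals within a single algebra. -/
def SeparatesIn (S : Str σ A) (α β γ δ : A → A → Prop) : Prop :=
  ∃ f, IsUnaryPoly S f ∧ ¬ Collapses f β α ∧ Collapses f δ γ

def tolFst (R : Set (A × B)) : A → A → Prop := fun a b => ∃ c, (a, c) ∈ R ∧ (b, c) ∈ R
def tolSnd (R : Set (A × B)) : B → B → Prop := fun a b => ∃ c, (c, a) ∈ R ∧ (c, b) ∈ R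

/-- Q_ab: the subalgebra of A² generated by the diagonal together with (a,b). -/
def Qab (S : Str σ A) (a b : A) : Set (A × A) :=
  Sg (prodStr S S) ({p : A × A | p.1 = p.2} ∪ {(a, b)})

/-- Principal congruence generated by (a,b). -/
def CgPair (S : Str σ A) (a b : A) : A → A → Prop :=
  fun x y => ∀ r, IsCongruence S r → r a b → r x y

def CongSup (S : Str σ A) (r s : A → A → Prop) : A → A → Prop :=
  fun x y => ∀ t, IsCongruence S t → CongLE r t → CongLE s t → t x y

def RelInf (r s : A → A → Prop) : A → A → Prop := fun x y => r x y ∧ s x y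

def Perspective (S : Str σ A) (α β γ δ : A → A → Prop) : Prop :=
  (β = CongSup S α δ ∧ γ = RelInf α δ) ∨ (δ = CongSup S β γ ∧ α = RelInf β γ)

/-- Thin semilattice edge modulo θ. -/
def ThinSL (S : Str σ A) (θ : A → A → Prop) (a b : A) : Prop :=
  ∃ f, IsTermOp2 S f ∧ θ (f a b) b ∧ θ (f b a) b

/-- Thin majority edge modulo θ. -/
def ThinMajE (S : Str σ A) (θ : A → A → Prop) (a b : A) : Prop :=
  ∃ g, IsTermOp3 S g ∧ θ (g a a b) a ∧ θ (g a b a) a ∧ θ (g b a a) a ∧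
    θ (g a b b) b ∧ θ (g b a b) b ∧ θ (g b b a) b

/-- Thin affine edge modulo θ. -/
def ThinAff (S : Str σ A) (θ : A → A → Prop) (a b : A) : Prop :=
  ∃ h, IsTermOp3 S h ∧ θ (h b a a) b ∧ θ (h a a b) b

def ThinEdge (S : Str σ A) (θ : A → A → Prop) (a b : A) : Prop :=
  ThinSL S θ a b ∨ ThinMajE S θ a b ∨ ThinAff S θ a b

def ThinAS (S : Str σ A) (θ : A → A → Prop) (a b : A) : Prop :=
  ThinSL S θ a b ∨ ThinAff S θ a b

def classOf (r : A → A → Prop) (a : A) : Set A := {x | r x a}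

def IdemStr (S : Str σ A) : Prop := ∀ (i : σ.ι) (a : A), S i (fun _ => a) = a

def OmitsType1 (S : Str σ A) : Prop :=
  ∀ α β : A → A → Prop, IsCongruence S α → IsCongruence S β → Prec S α β →
    ¬ TypIs S α β 1

def ReachASIn (S : Str σ A) (B : Set A) : A → A → Prop :=
  Relation.ReflTransGen (fun x y => x ∈ B ∧ y ∈ B ∧ ThinAS S (· = ·) x y)

/-- D is a maximal strongly connected component of the semilattice+affine digraph on B. -/
def IsASComponent (S : Str σ A) (B D : Set A) : Prop :=
  D.Nonempty ∧ D ⊆ B ∧ (∀ x ∈ D, ∀ y ∈ D, ReachASIn S B x y) ∧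
    ∀ x ∈ D, ∀ y ∈ B, ReachASIn S B x y → y ∈ D

def Reach (S : Str σ A) : A → A → Prop :=
  Relation.ReflTransGen (ThinEdge S (· = ·))

/-- u-maximal element of A. -/
def UMax (S : Str σ A) (a : A) : Prop := ∀ b, Reach S a b → Reach S b a

def ReachIn (S : Str σ A) (B : Set A) : A → A → Prop :=
  Relation.ReflTransGen (fun x y => x ∈ B ∧ y ∈ B ∧ ThinEdge S (· = ·) x y)

/-- u-maximal element of the subalgebra B. -/
def UMaxIn (S : Str σ A) (B : Set A) (b : A) : Prop :=
  b ∈ B ∧ ∀ c ∈ B, ReachIn S B b c → ReachIn S B c b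

def ReachMod (S : Str σ A) (θ : A → A → Prop) : A → A → Prop :=
  Relation.ReflTransGen (fun x y => θ x y ∨ ThinEdge S θ x y)

/-- The θ-block of a is u-maximal in A/θ. -/
def UMaxMod (S : Str σ A) (θ : A → A → Prop) (a : A) : Prop :=
  ∀ b, ReachMod S θ a b → ReachMod S θ b a

def CongOn (S : Str σ A) (B : Set A) (r : A → A → Prop) : Prop :=
  (∀ a ∈ B, r a a) ∧ (∀ a b, r a b → r b a) ∧ (∀ a b c, r a b → r b c → r a c) ∧
    ∀ (i : σ.ι) (x y : Fin (σ.arity i) → A), (∀ k, x k ∈ B) → (∀ k, y k ∈ B) →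
      (∀ k, r (x k) (y k)) → r (S i x) (S i y)

def MaximalCongOn (S : Str σ A) (B : Set A) (r : A → A → Prop) : Prop :=
  CongOn S B r ∧ (∃ a ∈ B, ∃ b ∈ B, ¬ r a b) ∧
    ∀ r', CongOn S B r' → (∀ x y, x ∈ B → y ∈ B → r x y → r' x y) →
      ((∀ x y, x ∈ B → y ∈ B → (r' x y ↔ r x y)) ∨ ∀ x ∈ B, ∀ y ∈ B, r' x y)

/-- Semilattice edge (thick). -/
def SLEdge (S : Str σ A) (a b : A) : Prop :=
  ∃ θ, MaximalCongOn S (Sg S {a, b}) θ ∧ ¬ θ a b ∧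
    ∃ f, IsTermOp2 S f ∧ θ (f a b) b ∧ θ (f b a) b ∧ θ (f a a) a ∧ θ (f b b) b

/-- Majority edge (thick). -/
def MajEdge (S : Str σ A) (a b : A) : Prop :=
  ∃ θ, MaximalCongOn S (Sg S {a, b}) θ ∧ ¬ θ a b ∧
    ∃ g, IsTermOp3 S g ∧ θ (g a a b) a ∧ θ (g a b a) a ∧ θ (g b a a) a ∧
      θ (g a b b) b ∧ θ (g b a b) b ∧ θ (g b b a) b

def famStr {n : ℕ} {𝔸 : Fin n → Type} (S : ∀ i, Str σ (𝔸 i)) : Str σ (∀ i, 𝔸 i) :=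
  fun op x i => S i op (fun k => x k i)

def SubdirectFam {n : ℕ} {𝔸 : Fin n → Type} (S : ∀ i, Str σ (𝔸 i))
    (R : Set (∀ i, 𝔸 i)) : Prop :=
  Subuniv (famStr S) R ∧ ∀ (i : Fin n) (a : 𝔸 i), ∃ r ∈ R, r i = a

/-- f is the family of coordinate actions of a single unary polynomial of R. -/
def IsPolyFam {n : ℕ} {𝔸 : Fin n → Type} (S : ∀ i, Str σ (𝔸 i)) (R : Set (∀ i, 𝔸 i))
    (f : ∀ i, 𝔸 i → 𝔸 i) : Prop :=
  ∃ (m : ℕ) (t : Term σ (m + 1)) (c : Fin m → ∀ i, 𝔸 i), (∀ k, c k ∈ R) ∧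
    ∀ i, f i = fun x => t.eval (S i) (Fin.cons x (fun k => c k i))

/-- (α_i,β_i) can be separated from (α_j,β_j) by a unary polynomial of R. -/
def SeparatesFam {n : ℕ} {𝔸 : Fin n → Type} (S : ∀ i, Str σ (𝔸 i)) (R : Set (∀ i, 𝔸 i))
    (i j : Fin n) (αi βi : 𝔸 i → 𝔸 i → Prop) (αj βj : 𝔸 j → 𝔸 j → Prop) : Prop :=
  ∃ f, IsPolyFam S R f ∧ ¬ Collapses (f i) βi αi ∧ Collapses (f j) βj αj

end UAlg

namespace UAlg

section Aux

variable {σ : Sig} {A B : Type}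

/-- Substitution of terms into a term. -/
def substMap {m n : ℕ} (e : Fin m → Term σ n) : Term σ m → Term σ n
  | .var j => e j
  | .app i ts => .app i fun k => substMap e (ts k)

lemma eval_substMap {m n : ℕ} (S : Str σ A) (e : Fin m → Term σ n) (t : Term σ m)
    (x : Fin n → A) :
    (substMap e t).eval S x = t.eval S fun j => (e j).eval S x := by
  induction t with
  | var j => rfl
  | app i ts ih => simp only [substMap, Term.eval]; congr 1; funext k; exact ih k

/-- Term realizing the composition of two unary polynomials. -/
def compTerm {n n' : ℕ} (t : Term σ (n + 1)) (t' : Term σ (n' + 1)) :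
    Term σ ((n' + n) + 1) :=
  substMap (Fin.cons
    (substMap (Fin.cons (.var 0) (fun j => .var (Fin.succ (Fin.castAdd n j)))) t')
    (fun j => .var (Fin.succ (Fin.natAdd n' j)))) t

lemma compTerm_eval {n n' : ℕ} (S : Str σ A) (t : Term σ (n + 1)) (t' : Term σ (n' + 1))
    (c : Fin n → A) (c' : Fin n' → A) (x : A) :
    (compTerm t t').eval S (Fin.cons x (Fin.append c' c)) =
      t.eval S (Fin.cons (t'.eval S (Fin.cons x c')) c) := by
  unfold compTerm
  rw [eval_substMap]
  congr 1
  funext j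
  refine Fin.cases ?_ ?_ j
  · rw [Fin.cons_zero, Fin.cons_zero, eval_substMap]
    congr 1
    funext j'
    refine Fin.cases ?_ ?_ j'
    · simp [Term.eval]
    · intro i; simp [Term.eval, Fin.cons_succ, Fin.append_left]
  · intro i; simp [Term.eval, Fin.cons_succ, Fin.append_right]

lemma unary_id (S : Str σ A) : IsUnaryPoly S (fun x => x) :=
  ⟨0, .var 0, Fin.elim0, by funext x; simp [Term.eval]⟩

lemma unary_comp {S : Str σ A} {f p : A → A} (hf : IsUnaryPoly S f)
    (hp : IsUnaryPoly S p) : IsUnaryPoly S (fun x => f (p x)) := by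
  obtain ⟨n, t, c, rfl⟩ := hf
  obtain ⟨n', t', c', rfl⟩ := hp
  refine ⟨n' + n, compTerm t t', Fin.append c' c, ?_⟩
  funext x
  rw [compTerm_eval]

lemma unary_slot (S : Str σ A) (i : σ.ι) (j : Fin (σ.arity i)) (v : Fin (σ.arity i) → A) :
    IsUnaryPoly S (fun x => S i (Function.update v j x)) := by
  classical
  refine ⟨σ.arity i, .app i (fun k => if k = j then .var 0 else .var k.succ), v, ?_⟩
  funext x
  simp only [Term.eval]
  congr 1
  funext k
  by_cases hk : k = j
  · subst hk; simp [Term.eval]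
  · simp [hk, Term.eval, Function.update_apply, Fin.cons_succ]

lemma eval_congr {S : Str σ A} {r : A → A → Prop} (hr : IsCongruence S r) :
    ∀ {n : ℕ} (t : Term σ n) (u v : Fin n → A), (∀ j, r (u j) (v j)) →
      r (t.eval S u) (t.eval S v) := by
  intro n t
  induction t with
  | var j => intro u v h; exact h j
  | app i ts ih =>
      intro u v h
      simp only [Term.eval]
      exact hr.compat i _ _ fun k => ih k u v h

lemma unary_preserves {S : Str σ A} {r : A → A → Prop} (hr : IsCongruence S r)
    {f : A → A} (hf : IsUnaryPoly S f) {x y : A} (h : r x y) : r (f x) (f y) := by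
  obtain ⟨n, t, c, rfl⟩ := hf
  refine eval_congr hr t _ _ ?_
  intro j
  refine Fin.cases ?_ ?_ j
  · simpa using h
  · intro i; simpa using hr.refl (c i)

variable {S : Str σ A} {T : Str σ B} {R : Set (A × B)}

lemma pair_fst {f : A → A} {g : B → B} (h : IsPolyPair S T R f g) : IsUnaryPoly S f := by
  obtain ⟨n, t, c, _, hf, _⟩ := h; exact ⟨n, t, fun k => (c k).1, hf⟩

lemma pair_snd {f : A → A} {g : B → B} (h : IsPolyPair S T R f g) : IsUnaryPoly T g := by
  obtain ⟨n, t, c, _, _, hg⟩ := h; exact ⟨n, t, fun k => (c k).2, hg⟩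

lemma polyPair_id : IsPolyPair S T R (fun x => x) (fun y => y) :=
  ⟨0, .var 0, Fin.elim0, fun k => k.elim0,
    by funext x; simp [Term.eval], by funext y; simp [Term.eval]⟩

lemma polyPair_comp {f f' : A → A} {g g' : B → B} (h : IsPolyPair S T R f g)
    (h' : IsPolyPair S T R f' g') :
    IsPolyPair S T R (fun x => f (f' x)) (fun y => g (g' y)) := by
  obtain ⟨n, t, c, hc, hf, hg⟩ := h
  obtain ⟨n', t', c', hc', hf', hg'⟩ := h'
  refine ⟨n' + n, compTerm t t', Fin.append c' c, ?_, ?_, ?_⟩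
  · intro k
    refine Fin.addCases (fun i => ?_) (fun i => ?_) k
    · rw [Fin.append_left]; exact hc' i
    · rw [Fin.append_right]; exact hc i
  · subst hf; subst hf'
    funext x
    have hfst : (fun k => (Fin.append c' c k).1) =
        Fin.append (fun k => (c' k).1) (fun k => (c k).1) := by
      funext k
      refine Fin.addCases (fun i => ?_) (fun i => ?_) k <;>
        simp [Fin.append_left, Fin.append_right]
    rw [hfst, compTerm_eval]
  · subst hg; subst hg'
    funext y
    have hsnd : (fun k => (Fin.append c' c k).2) =
        Fin.append (fun k => (c' k).2) (fun k => (c k).2) := by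
      funext k
      refine Fin.addCases (fun i => ?_) (fun i => ?_) k <;>
        simp [Fin.append_left, Fin.append_right]
    rw [hsnd, compTerm_eval]

lemma polyPair_iter {f : A → A} {g : B → B} (h : IsPolyPair S T R f g) :
    ∀ k, IsPolyPair S T R (f^[k]) (g^[k]) := by
  intro k
  induction k with
  | zero => rw [Function.iterate_zero, Function.iterate_zero]; exact polyPair_id
  | succ k ih =>
      rw [Function.iterate_succ', Function.iterate_succ']
      simp only [Function.comp_def]
      exact polyPair_comp h ih

lemma lift_fst (hR : SubdirectProd S T R) {p : A → A} (hp : IsUnaryPoly S p) :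
    ∃ q, IsPolyPair S T R p q := by
  obtain ⟨n, t, c, rfl⟩ := hp
  choose b hb using fun k => hR.2.1 (c k)
  exact ⟨fun y => t.eval T (Fin.cons y b), n, t, fun k => (c k, b k), hb, rfl, rfl⟩

lemma lift_snd (hR : SubdirectProd S T R) {q : B → B} (hq : IsUnaryPoly T q) :
    ∃ p, IsPolyPair S T R p q := by
  obtain ⟨n, t, c, rfl⟩ := hq
  choose a ha using fun k => hR.2.2 (c k)
  exact ⟨fun x => t.eval S (Fin.cons x a), n, t, fun k => (a k, c k), ha, rfl, rfl⟩

/-- Key lemma: for a prime quotient α ≺ β and a non-collapsing polynomial f,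
every β-pair outside α can be moved to a non-collapsed pair through f. -/
lemma lemC {α β : A → A → Prop} (hα : IsCongruence S α) (hβ : IsCongruence S β)
    (hab : Prec S α β) {f : A → A} (hf : IsUnaryPoly S f) (hnc : ¬ Collapses f β α) :
    ∀ x y, β x y → ¬ α x y → ∃ p, IsUnaryPoly S p ∧ ¬ α (f (p x)) (f (p y)) := by
  classical
  set θ : A → A → Prop :=
    fun x y => β x y ∧ ∀ p, IsUnaryPoly S p → α (f (p x)) (f (p y)) with hθ
  have hθcong : IsCongruence S θ := by
    constructor
    · intro a; exact ⟨hβ.refl a, fun p hp => hα.refl _⟩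
    · intro a b h; exact ⟨hβ.symm _ _ h.1, fun p hp => hα.symm _ _ (h.2 p hp)⟩
    · intro a b c h h'
      exact ⟨hβ.trans _ _ _ h.1 h'.1, fun p hp => hα.trans _ _ _ (h.2 p hp) (h'.2 p hp)⟩
    · intro i x y h
      refine ⟨hβ.compat i x y (fun k => (h k).1), ?_⟩
      intro p hp
      set z : ℕ → Fin (σ.arity i) → A :=
        fun j k => if (k : ℕ) < j then y k else x k with hz
      have hz0 : z 0 = x := by funext k; simp [hz]
      have hzar : z (σ.arity i) = y := by funext k; simp [hz, k.isLt]
      have hstep : ∀ j (hj : j < σ.arity i),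
          α (f (p (S i (z j)))) (f (p (S i (z (j + 1))))) := by
        intro j hj
        have h1 : Function.update (z j) ⟨j, hj⟩ (x ⟨j, hj⟩) = z j := by
          have hx : x ⟨j, hj⟩ = z j ⟨j, hj⟩ := by simp [hz]
          rw [hx, Function.update_eq_self]
        have h2 : Function.update (z j) ⟨j, hj⟩ (y ⟨j, hj⟩) = z (j + 1) := by
          funext k
          rcases eq_or_ne k ⟨j, hj⟩ with rfl | hk
          · simp [hz]
          · have hkj : (k : ℕ) ≠ j := fun hc => hk (Fin.ext hc)
            rw [Function.update_of_ne hk]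
            simp only [hz]
            by_cases hkl : (k : ℕ) < j
            · rw [if_pos hkl, if_pos (by omega)]
            · rw [if_neg hkl, if_neg (by omega)]
        have hq : IsUnaryPoly S (fun cv => p (S i (Function.update (z j) ⟨j, hj⟩ cv))) :=
          unary_comp hp (unary_slot S i ⟨j, hj⟩ (z j))
        have key : α (f (p (S i (Function.update (z j) ⟨j, hj⟩ (x ⟨j, hj⟩)))))
            (f (p (S i (Function.update (z j) ⟨j, hj⟩ (y ⟨j, hj⟩))))) :=
          (h ⟨j, hj⟩).2 _ hq
        rw [h1, h2] at key
        exact key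
      have hchain : ∀ j, j ≤ σ.arity i → α (f (p (S i x))) (f (p (S i (z j)))) := by
        intro j
        induction j with
        | zero => intro _; rw [hz0]; exact hα.refl _
        | succ j ih =>
            intro hj
            exact hα.trans _ _ _ (ih (Nat.le_of_succ_le hj)) (hstep j hj)
      have hfin := hchain (σ.arity i) le_rfl
      rwa [hzar] at hfin
  have hαθ : CongLE α θ := by
    intro x y hxy
    exact ⟨hab.1 x y hxy,
      fun p hp => unary_preserves hα hf (unary_preserves hα hp hxy)⟩
  have hθβ : CongLE θ β := fun x y h => h.1
  have hnc' : ∃ x y, β x y ∧ ¬ α (f x) (f y) := by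
    unfold Collapses at hnc; push_neg at hnc; exact hnc
  have hθα : θ = α := by
    rcases hab.2.2 θ hθcong hαθ hθβ with h | h
    · exact h
    · exfalso
      obtain ⟨x₀, y₀, hb, hna⟩ := hnc'
      have hθb : θ x₀ y₀ := by rw [h]; exact hb
      exact hna (hθb.2 _ (unary_id S))
  intro x y hbxy hnaxy
  have hnθ : ¬ θ x y := by rw [hθα]; exact hnaxy
  simp only [hθ] at hnθ
  push_neg at hnθ
  exact hnθ hbxy

lemma iter_stab {X : Type} [Finite X] (φ : X → X) :
    ∃ k, 1 ≤ k ∧ ∀ j, 1 ≤ j → φ^[j * k] = φ^[k] := by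
  obtain ⟨a, b, hne, heq⟩ := Finite.exists_ne_map_eq_of_infinite (fun n : ℕ => φ^[n + 1])
  obtain ⟨a, b, hlt, heq⟩ : ∃ a b, a < b ∧ φ^[a + 1] = φ^[b + 1] := by
    rcases hne.lt_or_gt with h | h
    · exact ⟨a, b, h, heq⟩
    · exact ⟨b, a, h, heq.symm⟩
  set i := a + 1 with hi
  set d := b - a with hd
  have hd1 : 1 ≤ d := by omega
  have hid : φ^[i + d] = φ^[i] := by
    have hbd : i + d = b + 1 := by omega
    rw [hbd]; exact heq.symm
  have step : ∀ n, i ≤ n → φ^[n + d] = φ^[n] := by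
    intro n hn
    have h1 : n + d = (n - i) + (i + d) := by omega
    have h2 : (n - i) + i = n := by omega
    rw [h1, Function.iterate_add, hid, ← Function.iterate_add, h2]
  have claim : ∀ m n, i ≤ n → φ^[n + m * d] = φ^[n] := by
    intro m
    induction m with
    | zero => intro n hn; simp
    | succ m ih =>
        intro n hn
        have h1 : n + (m + 1) * d = (n + d) + m * d := by ring
        rw [h1, ih (n + d) (by omega), step n hn]
  refine ⟨i * d, Nat.mul_pos (by omega) hd1, ?_⟩
  intro j hj
  obtain ⟨j', rfl⟩ : ∃ j', j = j' + 1 := ⟨j - 1, by omega⟩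
  have h1 : (j' + 1) * (i * d) = i * d + (j' * i) * d := by ring
  rw [h1]
  exact claim (j' * i) (i * d) (Nat.le_mul_of_pos_right i hd1)

lemma iter_image {X : Type} (φ : X → X) (W : Set X) (h : φ '' W = W) :
    ∀ j, φ^[j] '' W = W := by
  intro j
  induction j with
  | zero => simp
  | succ j ih =>
      rw [Function.iterate_succ', Set.image_comp, ih, h]

lemma iter_range {X : Type} (φ : X → X) (W : Set X) (himg : φ '' W = W)
    (hr : Set.range φ = W) {k : ℕ} (hk : 1 ≤ k) : Set.range (φ^[k]) = W := by
  obtain ⟨k', rfl⟩ : ∃ k', k = k' + 1 := ⟨k - 1, by omega⟩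
  rw [Function.iterate_succ, Set.range_comp, hr, iter_image φ W himg]

end Aux

end UAlg


open UAlg

/-- for inseparable intervals across a subdirect product, any
(α,β)-minimal set U is the A-image of an idempotent polynomial whose B-image
is a (γ,δ)-minimal set. -/
theorem stmt8 {σ : Sig} {A B : Type} [Finite A] [Finite B]
    (S : Str σ A) (T : Str σ B) (R : Set (A × B)) (hR : SubdirectProd S T R)
    (α β : A → A → Prop) (γ δ : B → B → Prop)
    (hα : IsCongruence S α) (hβ : IsCongruence S β)
    (hγ : IsCongruence T γ) (hδ : IsCongruence T δ)
    (hab : Prec S α β) (hgd : Prec T γ δ)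
    (h1 : ¬ SeparatesPair S T R α β γ δ) (h2 : ¬ SeparatesPairRev S T R γ δ α β) :
    ∀ U : Set A, MinSet S α β U →
      ∃ f g, IsPolyPair S T R f g ∧ (∀ x, f (f x) = f x) ∧ (∀ y, g (g y) = g y) ∧
        Set.range f = U ∧ MinSet T γ δ (Set.range g) := by
  classical
  intro U hU
  -- transfers between the two coordinates coming from inseparability
  have transfer1 : ∀ {f : A → A} {g : B → B}, IsPolyPair S T R f g →
      ¬ Collapses f β α → ¬ Collapses g δ γ :=
    fun hp hf hg => h1 ⟨_, _, hp, hf, hg⟩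
  have transfer2 : ∀ {f : A → A} {g : B → B}, IsPolyPair S T R f g →
      ¬ Collapses g δ γ → ¬ Collapses f β α :=
    fun hp hg hf => h2 ⟨_, _, hp, hg, hf⟩
  have ncE : ∀ {f : A → A}, ¬ Collapses f β α → ∃ x y, β x y ∧ ¬ α (f x) (f y) := by
    intro f hf; unfold Collapses at hf; push_neg at hf; exact hf
  -- a minimal element of G
  obtain ⟨f₀, hf₀u, hf₀nc, hf₀r⟩ := hU.1
  obtain ⟨g₀, hp₀⟩ := lift_fst hR hf₀u
  have hex : ∃ m, ∃ f g, IsPolyPair S T R f g ∧ ¬ Collapses f β α ∧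
      Set.range f ⊆ U ∧ (Set.range g).ncard = m :=
    ⟨_, f₀, g₀, hp₀, hf₀nc, by rw [hf₀r], rfl⟩
  set m := Nat.find hex with hmdef
  obtain ⟨f, g, hpair, hnc, hrsub, hm⟩ := Nat.find_spec hex
  have hmin : ∀ f' g', IsPolyPair S T R f' g' → ¬ Collapses f' β α →
      Set.range f' ⊆ U → m ≤ (Set.range g').ncard := by
    intro f' g' hp' hn' hs'
    by_contra hlt
    exact Nat.find_min hex (lt_of_not_ge hlt) ⟨f', g', hp', hn', hs', rfl⟩
  have claimA : ∀ (f' : A → A) (g' : B → B), IsPolyPair S T R f' g' →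
      ¬ Collapses f' β α → Set.range f' ⊆ U → Set.range f' = U :=
    fun f' g' hp' hn' hs' => hU.2 _ ⟨f', pair_fst hp', hn', rfl⟩ hs'
  have hfr : Set.range f = U := claimA f g hpair hnc hrsub
  -- sandwich (f,g) with itself
  obtain ⟨x₀, y₀, hbxy, hnxy⟩ := ncE hnc
  have hbf : β (f x₀) (f y₀) := unary_preserves hβ (pair_fst hpair) hbxy
  obtain ⟨p, hpu, hpnc⟩ := lemC hα hβ hab (pair_fst hpair) hnc (f x₀) (f y₀) hbf hnxy
  obtain ⟨p', hpp⟩ := lift_fst hR hpu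
  set φ : A → A := fun x => f (p x) with hφdef
  set ψ : B → B := fun y => g (p' y) with hψdef
  have hφψ : IsPolyPair S T R φ ψ := polyPair_comp hpair hpp
  have hF : IsPolyPair S T R (fun x => φ (f x)) (fun y => ψ (g y)) :=
    polyPair_comp hφψ hpair
  have hFnc : ¬ Collapses (fun x => φ (f x)) β α := fun hcol => hpnc (hcol x₀ y₀ hbxy)
  have hFsub : Set.range (fun x => φ (f x)) ⊆ U := by
    rintro u ⟨x, rfl⟩
    show f (p (f x)) ∈ U
    rw [← hfr]; exact ⟨p (f x), rfl⟩
  have hFr : Set.range (fun x => φ (f x)) = U := claimA _ _ hF hFnc hFsub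
  have e1 : Set.range (φ ∘ f) = U := hFr
  have hφU : φ '' U = U := by rw [← hfr, ← Set.range_comp, e1]; exact hfr.symm
  have hφsub : Set.range φ ⊆ U := by
    rintro u ⟨x, rfl⟩
    show f (p x) ∈ U
    rw [← hfr]; exact ⟨p x, rfl⟩
  have hφr : Set.range φ = U := by
    refine Set.Subset.antisymm hφsub ?_
    intro u hu
    rw [← hφU] at hu
    exact Set.image_subset_range φ U hu
  -- B side images
  have hGm : m ≤ (Set.range (fun y => ψ (g y))).ncard := hmin _ _ hF hFnc hFsub
  have e2 : Set.range (fun y => ψ (g y)) = ψ '' Set.range g := Set.range_comp ψ g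
  have hψsub' : ψ '' Set.range g ⊆ Set.range g := by
    rintro v ⟨w, ⟨y, rfl⟩, rfl⟩
    exact ⟨p' (g y), rfl⟩
  have hψg : ψ '' Set.range g = Set.range g := by
    refine Set.eq_of_subset_of_ncard_le hψsub' ?_ (Set.toFinite _)
    rw [hm, ← e2]; exact hGm
  have hψr : Set.range ψ = Set.range g := by
    refine Set.Subset.antisymm ?_ ?_
    · rintro v ⟨y, rfl⟩; exact ⟨p' y, rfl⟩
    · intro v hv; rw [← hψg] at hv; exact Set.image_subset_range ψ _ hv
  -- idempotent iterate
  obtain ⟨k₁, hk₁1, hk₁⟩ := iter_stab φ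
  obtain ⟨k₂, hk₂1, hk₂⟩ := iter_stab ψ
  have hk1 : 1 ≤ k₁ * k₂ := Nat.mul_pos hk₁1 hk₂1
  have hφk : φ^[k₁ * k₂] = φ^[k₁] := by rw [mul_comm]; exact hk₁ k₂ hk₂1
  have hψk : ψ^[k₁ * k₂] = ψ^[k₂] := hk₂ k₁ hk₁1
  have hφidem : ∀ x, φ^[k₁ * k₂] (φ^[k₁ * k₂] x) = φ^[k₁ * k₂] x := by
    intro x
    have ha : φ^[k₁ * k₂ + k₁ * k₂] x = φ^[k₁ * k₂] (φ^[k₁ * k₂] x) :=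
      Function.iterate_add_apply φ _ _ x
    have hb : φ^[k₁ * k₂ + k₁ * k₂] = φ^[k₁] := by
      have hc : k₁ * k₂ + k₁ * k₂ = (2 * k₂) * k₁ := by ring
      rw [hc]; exact hk₁ (2 * k₂) (by omega)
    rw [← ha, hb, ← hφk]
  have hψidem : ∀ y, ψ^[k₁ * k₂] (ψ^[k₁ * k₂] y) = ψ^[k₁ * k₂] y := by
    intro y
    have ha : ψ^[k₁ * k₂ + k₁ * k₂] y = ψ^[k₁ * k₂] (ψ^[k₁ * k₂] y) :=
      Function.iterate_add_apply ψ _ _ y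
    have hb : ψ^[k₁ * k₂ + k₁ * k₂] = ψ^[k₂] := by
      have hc : k₁ * k₂ + k₁ * k₂ = (2 * k₁) * k₂ := by ring
      rw [hc]; exact hk₂ (2 * k₁) (by omega)
    rw [← ha, hb, ← hψk]
  have hEpair : IsPolyPair S T R (φ^[k₁ * k₂]) (ψ^[k₁ * k₂]) := polyPair_iter hφψ _
  have hrE : Set.range (φ^[k₁ * k₂]) = U := iter_range φ U hφU hφr hk1
  have hrE' : Set.range (ψ^[k₁ * k₂]) = Set.range g := iter_range ψ _ hψg hψr hk1
  have hEfix : ∀ u ∈ U, φ^[k₁ * k₂] u = u := by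
    intro u hu
    rw [← hrE] at hu
    obtain ⟨x, rfl⟩ := hu
    exact hφidem x
  have hEnc : ¬ Collapses (φ^[k₁ * k₂]) β α := by
    intro hcol
    have hcl := hcol (f x₀) (f y₀) hbf
    rw [hEfix (f x₀) (by rw [← hfr]; exact ⟨x₀, rfl⟩),
      hEfix (f y₀) (by rw [← hfr]; exact ⟨y₀, rfl⟩)] at hcl
    exact hnxy hcl
  have hE'nc : ¬ Collapses (ψ^[k₁ * k₂]) δ γ := transfer1 hEpair hEnc
  refine ⟨φ^[k₁ * k₂], ψ^[k₁ * k₂], hEpair, hφidem, hψidem, hrE,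
    ⟨ψ^[k₁ * k₂], pair_snd hEpair, hE'nc, rfl⟩, ?_⟩
  -- minimality of the (γ,δ)-set
  intro V hVw hVsub
  by_contra hne
  have hlt : V.ncard < (Set.range g).ncard := by
    rw [← hrE']
    exact Set.ncard_lt_ncard (hVsub.ssubset_of_ne hne) (Set.toFinite _)
  obtain ⟨h, hhu, hhnc, hhr⟩ := hVw
  obtain ⟨h₁, hhp⟩ := lift_snd hR hhu
  have hh₁nc : ¬ Collapses h₁ β α := transfer2 hhp hhnc
  -- first sandwich: (h₁, h) after (E, E')
  obtain ⟨x₁, y₁, hbx1, hnx1⟩ := ncE hEnc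
  have hb1 : β (φ^[k₁ * k₂] x₁) (φ^[k₁ * k₂] y₁) :=
    unary_preserves hβ (pair_fst hEpair) hbx1
  obtain ⟨p₂, hp₂u, hp₂nc⟩ := lemC hα hβ hab (pair_fst hhp) hh₁nc _ _ hb1 hnx1
  obtain ⟨p₂', hp₂p⟩ := lift_fst hR hp₂u
  have hw1 : IsPolyPair S T R (fun x => h₁ (p₂ (φ^[k₁ * k₂] x)))
      (fun y => h (p₂' (ψ^[k₁ * k₂] y))) :=
    by exact polyPair_comp hhp (polyPair_comp hp₂p hEpair)
  have hw1nc : ¬ Collapses (fun x => h₁ (p₂ (φ^[k₁ * k₂] x))) β α :=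
    fun hcol => hp₂nc (hcol x₁ y₁ hbx1)
  -- second sandwich: (E, E') after the first
  obtain ⟨x₂, y₂, hbx2, hnx2⟩ := ncE hw1nc
  have hb2 : β (h₁ (p₂ (φ^[k₁ * k₂] x₂))) (h₁ (p₂ (φ^[k₁ * k₂] y₂))) :=
    unary_preserves hβ (pair_fst hw1) hbx2
  obtain ⟨p₃, hp₃u, hp₃nc⟩ := lemC hα hβ hab (pair_fst hEpair) hEnc _ _ hb2 hnx2
  obtain ⟨p₃', hp₃p⟩ := lift_fst hR hp₃u
  have hw2 : IsPolyPair S T R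
      (fun x => φ^[k₁ * k₂] (p₃ (h₁ (p₂ (φ^[k₁ * k₂] x)))))
      (fun y => ψ^[k₁ * k₂] (p₃' (h (p₂' (ψ^[k₁ * k₂] y))))) :=
    by exact polyPair_comp hEpair (polyPair_comp hp₃p hw1)
  have hw2nc : ¬ Collapses (fun x => φ^[k₁ * k₂] (p₃ (h₁ (p₂ (φ^[k₁ * k₂] x))))) β α :=
    fun hcol => hp₃nc (hcol x₂ y₂ hbx2)
  have hw2sub : Set.range (fun x => φ^[k₁ * k₂] (p₃ (h₁ (p₂ (φ^[k₁ * k₂] x))))) ⊆ U := by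
    rintro u ⟨x, rfl⟩
    show φ^[k₁ * k₂] (p₃ (h₁ (p₂ (φ^[k₁ * k₂] x)))) ∈ U
    rw [← hrE]; exact ⟨_, rfl⟩
  have hge := hmin _ _ hw2 hw2nc hw2sub
  have hsub2 : Set.range (fun y => ψ^[k₁ * k₂] (p₃' (h (p₂' (ψ^[k₁ * k₂] y))))) ⊆
      (fun v => ψ^[k₁ * k₂] (p₃' v)) '' V := by
    rintro v ⟨y, rfl⟩
    exact ⟨h (p₂' (ψ^[k₁ * k₂] y)), by rw [← hhr]; exact ⟨_, rfl⟩, rfl⟩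
  have hcard : (Set.range (fun y => ψ^[k₁ * k₂] (p₃' (h (p₂' (ψ^[k₁ * k₂] y)))))).ncard ≤
      V.ncard := by
    calc (Set.range (fun y => ψ^[k₁ * k₂] (p₃' (h (p₂' (ψ^[k₁ * k₂] y)))))).ncard
        ≤ ((fun v => ψ^[k₁ * k₂] (p₃' v)) '' V).ncard :=
          Set.ncard_le_ncard hsub2 (Set.toFinite _)
      _ ≤ V.ncard := Set.ncard_image_le (Set.toFinite _)
  omega
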